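/- A strongly connected directed graph G satisfies bal(G) = 1 if and only if G is Eulerian, i.e., for every vertex the total weight of incoming edges equals the total weight of outgoing edges. -/
import Mathlib


open Finset

variable {V : Type*} [Fintype V] [DecidableEq V]

/-- Total weight of edges from `S` to its complement. -/
def cutWeight (w : V → V → ℝ) (S : Finset V) : ℝ :=
  ∑ u ∈ S, ∑ v ∈ Sᶜ, w u v

/-- `G` is strongly connected. -/
def StronglyConnected (w : V → V → ℝ) : Prop :=
  ∀ u v : V, Relation.ReflTransGen (fun a b => 0 < w a b) u v

/-- The imbalance `bal(G)`: the least nonnegative `α` such that for every cut `S`,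
`w(S, V∖S) ≤ α · w(V∖S, S)`. -/
noncomputable def bal (w : V → V → ℝ) : ℝ :=
  sInf {α : ℝ | 0 ≤ α ∧ ∀ S : Finset V, cutWeight w S ≤ α * cutWeight w Sᶜ}

/-- `G` is Eulerian: at each vertex, the total weight of incoming edges equals the
total weight of outgoing edges. -/
def IsEulerian (w : V → V → ℝ) : Prop :=
  ∀ v : V, (∑ u, w u v) = ∑ u, w v u

lemma cutWeight_nonneg (w : V → V → ℝ) (hw : ∀ u v, 0 ≤ w u v) (S : Finset V) :
    0 ≤ cutWeight w S :=
  Finset.sum_nonneg fun u _ => Finset.sum_nonneg fun v _ => hw u v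

lemma cut_sub (w : V → V → ℝ) (S : Finset V) :
    cutWeight w S - cutWeight w Sᶜ = ∑ v ∈ S, ((∑ u, w v u) - (∑ u, w u v)) := by
  have h : ∀ v, ((∑ u, w v u) - (∑ u, w u v))
      = (∑ u ∈ S, w v u - ∑ u ∈ S, w u v) + (∑ u ∈ Sᶜ, w v u - ∑ u ∈ Sᶜ, w u v) := by
    intro v
    rw [← Finset.sum_add_sum_compl S (w v), ← Finset.sum_add_sum_compl S (fun u => w u v)]
    ring
  simp only [h, Finset.sum_add_distrib, Finset.sum_sub_distrib]
  have h1 : ∑ v ∈ S, ∑ u ∈ S, w v u = ∑ v ∈ S, ∑ u ∈ S, w u v := Finset.sum_comm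
  have h2 : ∑ v ∈ S, ∑ u ∈ Sᶜ, w u v = cutWeight w Sᶜ := by
    rw [cutWeight, compl_compl]; exact Finset.sum_comm
  rw [h1, h2, cutWeight]
  ring

lemma crossing (w : V → V → ℝ) {S : Finset V} {u v : V}
    (hu : u ∈ S) (h : Relation.ReflTransGen (fun a b => 0 < w a b) u v) :
    v ∉ S → ∃ a ∈ S, ∃ b ∈ Sᶜ, 0 < w a b := by
  induction h with
  | refl => exact fun hv => absurd hu hv
  | @tail b c h' e ih =>
    intro hv
    by_cases hb : b ∈ S
    · exact ⟨b, hb, c, Finset.mem_compl.mpr hv, e⟩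
    · exact ih hb

lemma cut_pos (w : V → V → ℝ) (hw : ∀ u v, 0 ≤ w u v) (hsc : StronglyConnected w)
    {S : Finset V} (h1 : S.Nonempty) (h2 : S ≠ univ) : 0 < cutWeight w S := by
  obtain ⟨u, hu⟩ := h1
  obtain ⟨v, hv⟩ : ∃ v, v ∉ S := by
    by_contra h; push_neg at h; exact h2 (Finset.eq_univ_iff_forall.mpr h)
  obtain ⟨a, ha, b, hb, hab⟩ := crossing w hu (hsc u v) hv
  have hrow : 0 < ∑ x ∈ Sᶜ, w a x :=
    Finset.sum_pos' (fun x _ => hw a x) ⟨b, hb, hab⟩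
  exact Finset.sum_pos' (fun x _ => Finset.sum_nonneg fun y _ => hw x y) ⟨a, ha, hrow⟩

/-- A strongly connected directed graph `G` satisfies `bal(G) = 1` iff it is Eulerian. -/
theorem stmt2 [Nontrivial V] (w : V → V → ℝ) (hw : ∀ u v, 0 ≤ w u v)
    (hsc : StronglyConnected w) :
    bal w = 1 ↔ IsEulerian w := by
  set s : Set ℝ := {α : ℝ | 0 ≤ α ∧ ∀ S : Finset V, cutWeight w S ≤ α * cutWeight w Sᶜ}
    with hs
  constructor
  · intro hbal
    -- first: every cut satisfies cut S ≤ cut Sᶜ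
    have key : ∀ S : Finset V, cutWeight w S ≤ cutWeight w Sᶜ := by
      intro S
      by_contra hlt
      push_neg at hlt
      -- S is nonempty and proper
      have hSne : S.Nonempty := by
        rcases S.eq_empty_or_nonempty with h | h
        · exfalso
          have : cutWeight w S = 0 := by simp [cutWeight, h]
          linarith [cutWeight_nonneg w hw Sᶜ]
        · exact h
      have hSproper : S ≠ univ := by
        intro h
        have : cutWeight w S = 0 := by simp [cutWeight, h]
        linarith [cutWeight_nonneg w hw Sᶜ]
      have hScne : Sᶜ.Nonempty := by
        rcases Sᶜ.eq_empty_or_nonempty with h | h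
        · exact absurd (by simpa [Finset.compl_eq_empty_iff] using h) hSproper
        · exact h
      have hScproper : Sᶜ ≠ univ := by
        intro h
        rw [Finset.compl_eq_univ_iff] at h
        exact (Finset.nonempty_iff_ne_empty.mp hSne) h
      have hcpos : 0 < cutWeight w Sᶜ := cut_pos w hw hsc hScne hScproper
      -- s is nonempty, else bal = 0
      rcases Set.eq_empty_or_nonempty s with hse | hsne
      · have : bal w = 0 := by rw [bal, ← hs, hse, Real.sInf_empty]
        rw [hbal] at this; norm_num at this
      -- lower bound on sInf
      have hlb : cutWeight w S / cutWeight w Sᶜ ≤ bal w := by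
        rw [bal, ← hs]
        apply le_csInf hsne
        intro α hα
        rw [div_le_iff₀ hcpos]
        exact hα.2 S
      rw [hbal] at hlb
      rw [div_le_iff₀ hcpos, one_mul] at hlb
      linarith
    -- equality of cuts, then Eulerian via singletons
    intro v
    have h1 := key {v}
    have h2 := key {v}ᶜ
    rw [compl_compl] at h2
    have heq : cutWeight w {v} = cutWeight w {v}ᶜ := le_antisymm h1 h2
    have := cut_sub w {v}
    rw [heq, sub_self] at this
    simp only [Finset.sum_singleton] at this
    linarith [this]
  · intro he
    have hcut : ∀ S : Finset V, cutWeight w S = cutWeight w Sᶜ := by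
      intro S
      have := cut_sub w S
      have hz : ∑ v ∈ S, ((∑ u, w v u) - (∑ u, w u v)) = 0 := by
        apply Finset.sum_eq_zero
        intro v _
        rw [he v]; ring
      rw [hz] at this
      linarith
    have hmem : (1 : ℝ) ∈ s := by
      refine ⟨zero_le_one, fun S => ?_⟩
      rw [one_mul, hcut S]
    have hbdd : BddBelow s := ⟨0, fun α hα => hα.1⟩
    apply le_antisymm
    · exact csInf_le hbdd hmem
    · apply le_csInf ⟨1, hmem⟩
      intro α hα
      obtain ⟨a, b, hab⟩ := exists_pair_ne V
      have hSne : ({a} : Finset V).Nonempty := ⟨a, Finset.mem_singleton_self a⟩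
      have hSproper : ({a} : Finset V) ≠ univ := by
        intro h
        have : b ∈ ({a} : Finset V) := h ▸ Finset.mem_univ b
        exact hab (Finset.mem_singleton.mp this).symm
      have hpos : 0 < cutWeight w {a} := cut_pos w hw hsc hSne hSproper
      have := hα.2 {a}
      rw [← hcut {a}] at this
      nlinarith
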